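/- Let p > 3 be a prime and l, n natural numbers with l ≥ 1. Set d = gcd(n, p−1) and suppose 1 < d < (p−1)/2, so that p = d·s + 1 for s = (p−1)/d. Then the set { x_1^n + ⋯ + x_l^n : x_1, …, x_l ∈ ℤ/pℤ } of sums of l n-th powers in ℤ/pℤ has cardinality at least min{ p, (2l−1)·s + 1 }. -/

import Mathlib

open Finset
open scoped Pointwise

/-- arithmetic progression as a Finset of `ZMod p` -/
private def ap (p : ℕ) (a r : ZMod p) (m : ℕ) : Finset (ZMod p) :=
  (range m).image (fun i : ℕ => a + (i : ZMod p) * r)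

private lemma mem_ap {p : ℕ} {a r x : ZMod p} {m : ℕ} :
    x ∈ ap p a r m ↔ ∃ i, i < m ∧ a + (i : ZMod p) * r = x := by
  simp [ap, mem_image]

private lemma natCast_inj_of_lt {p : ℕ} [Fact p.Prime] {i j : ℕ} (hi : i < p) (hj : j < p)
    (h : (i : ZMod p) = (j : ZMod p)) : i = j := by
  have := congrArg ZMod.val h
  rwa [ZMod.val_cast_of_lt hi, ZMod.val_cast_of_lt hj] at this

private lemma ap_card {p : ℕ} [Fact p.Prime] {a r : ZMod p} {m : ℕ} (hr : r ≠ 0) (hm : m ≤ p) :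
    #(ap p a r m) = m := by
  rw [ap, card_image_of_injOn, card_range]
  intro i hi j hj hij
  simp only [coe_range, Set.mem_Iio] at hi hj
  have : (i : ZMod p) * r = (j : ZMod p) * r := add_left_cancel hij
  exact natCast_inj_of_lt (lt_of_lt_of_le hi hm) (lt_of_lt_of_le hj hm) (mul_right_cancel₀ hr this)

/-- extending an AP by one step on the right -/
private lemma ap_ext {p : ℕ} (a r : ZMod p) {m : ℕ} (hm : 1 ≤ m) :
    ap p a r m ∪ (ap p a r m).image (· + r) = ap p a r (m + 1) := by
  ext x
  simp only [mem_union, mem_image, mem_ap]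
  constructor
  · rintro (⟨i, hi, rfl⟩ | ⟨y, ⟨i, hi, rfl⟩, rfl⟩)
    · exact ⟨i, by omega, rfl⟩
    · exact ⟨i + 1, by omega, by push_cast; ring⟩
  · rintro ⟨i, hi, rfl⟩
    rcases Nat.lt_or_ge i m with h | h
    · exact Or.inl ⟨i, h, rfl⟩
    · have hieq : i = m := by omega
      subst hieq
      refine Or.inr ⟨a + ((i - 1 : ℕ) : ZMod p) * r, ⟨i - 1, by omega, rfl⟩, ?_⟩
      have h2 : ((i - 1 : ℕ) : ZMod p) + 1 = (i : ZMod p) := by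
        have h3 : i - 1 + 1 = i := by omega
        calc ((i - 1 : ℕ) : ZMod p) + 1 = ((i - 1 + 1 : ℕ) : ZMod p) := by push_cast; ring
        _ = (i : ZMod p) := by rw [h3]
      calc a + ((i-1 : ℕ) : ZMod p) * r + r = a + (((i-1 : ℕ) : ZMod p) + 1) * r := by ring
      _ = a + (i : ZMod p) * r := by rw [h2]

/-- reversing an AP -/
private lemma ap_rev {p : ℕ} (a r : ZMod p) (m : ℕ) :
    ap p a r m = ap p (a + ((m - 1 : ℕ) : ZMod p) * r) (-r) m := by
  have key : ∀ i, i < m → ((m - 1 - i : ℕ) : ZMod p) = ((m-1 : ℕ) : ZMod p) - (i : ZMod p) := by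
    intro i hi
    have h3 : m - 1 - i + i = m - 1 := by omega
    calc ((m - 1 - i : ℕ) : ZMod p) = ((m - 1 - i : ℕ) : ZMod p) + (i : ZMod p) - i := by ring
    _ = ((m - 1 - i + i : ℕ) : ZMod p) - i := by push_cast; ring
    _ = _ := by rw [h3]
  ext x
  simp only [mem_ap]
  constructor
  · rintro ⟨i, hi, rfl⟩
    refine ⟨m - 1 - i, by omega, ?_⟩
    rw [key _ (by omega)]; ring
  · rintro ⟨i, hi, rfl⟩
    refine ⟨m - 1 - i, by omega, ?_⟩
    rw [key _ (by omega)]; ring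

private lemma val_sub_one {p : ℕ} [Fact p.Prime] {z : ZMod p} (hz : z ≠ 0) :
    (z - 1).val = z.val - 1 := by
  have hv : 1 ≤ z.val := by
    rcases Nat.eq_zero_or_pos z.val with h | h
    · exact absurd ((ZMod.val_eq_zero z).mp h) hz
    · exact h
  have hlt : z.val - 1 < p := by
    have := ZMod.val_lt z
    omega
  have : z - 1 = ((z.val - 1 : ℕ) : ZMod p) := by
    have h1 : ((z.val : ℕ) : ZMod p) = z := by simp [ZMod.natCast_val, ZMod.cast_id]
    push_cast [Nat.cast_sub hv]
    rw [h1]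
  rw [this, ZMod.val_cast_of_lt hlt]

private lemma one_exit {p : ℕ} [Fact p.Prime] {X : Finset (ZMod p)} (hne : X.Nonempty)
    {r : ZMod p} (hr : r ≠ 0) (hc : #(X ∪ X.image (· + r)) = #X + 1) :
    ∃ a : ZMod p, X = ap p a (-r) #X := by
  classical
  have hinj : Function.Injective (fun x : ZMod p => x + r) := add_left_injective r
  have hcard_im : #(X.image (· + r)) = #X := card_image_of_injective _ hinj
  -- the set of "exits"
  set Xe := X.filter (fun x => x + r ∉ X) with hXe
  have hXemap : Xe.image (· + r) = (X.image (· + r)) \ X := by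
    ext y
    simp only [hXe, mem_image, mem_filter, mem_sdiff]
    constructor
    · rintro ⟨x, ⟨hx, hx'⟩, rfl⟩
      exact ⟨⟨x, hx, rfl⟩, hx'⟩
    · rintro ⟨⟨x, hx, rfl⟩, hy⟩
      exact ⟨x, ⟨hx, hy⟩, rfl⟩
  have hsd : #((X.image (· + r)) \ X) = 1 := by
    have h1 : #(X ∪ X.image (· + r)) = #X + #((X.image (· + r)) \ X) := by
      rw [← union_sdiff_self_eq_union, card_union_of_disjoint disjoint_sdiff]
    omega
  have hXecard : #Xe = 1 := by
    rw [← hXemap] at hsd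
    rwa [card_image_of_injective _ hinj] at hsd
  obtain ⟨x₁, hx1⟩ := card_eq_one.mp hXecard
  have hx1X : x₁ ∈ X := by
    have := hx1 ▸ (mem_singleton_self x₁); exact (mem_filter.mp this).1
  have hx1exit : x₁ + r ∉ X := by
    have := hx1 ▸ (mem_singleton_self x₁); exact (mem_filter.mp this).2
  have huniq : ∀ x ∈ X, x ≠ x₁ → x + r ∈ X := by
    intro x hx hne'
    by_contra h
    have : x ∈ Xe := mem_filter.mpr ⟨hx, h⟩
    rw [hx1] at this
    exact hne' (mem_singleton.mp this)
  -- index map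
  set j : ZMod p → ℕ := fun x => ((x₁ - x) * r⁻¹).val with hj
  have hjinj : Set.InjOn j X := by
    intro x hx y hy hxy
    have h1 : ((x₁ - x) * r⁻¹) = ((x₁ - y) * r⁻¹) := by
      have := congrArg (fun t : ℕ => (t : ZMod p)) hxy
      simpa [hj, ZMod.natCast_val, ZMod.cast_id] using this
    have h2 := mul_right_cancel₀ (inv_ne_zero hr) h1
    exact sub_right_injective h2
  have hj1 : j x₁ = 0 := by simp [hj]
  set S := X.image j with hS
  have hScard : #S = #X := card_image_of_injOn hjinj
  have hS0 : 0 ∈ S := mem_image.mpr ⟨x₁, hx1X, hj1⟩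
  -- key: identity x = x₁ - (j x) * r for x in general
  have hid : ∀ x : ZMod p, x₁ - ((j x : ℕ) : ZMod p) * r = x := by
    intro x
    have h1 : ((j x : ℕ) : ZMod p) = (x₁ - x) * r⁻¹ := by
      simp [hj, ZMod.natCast_val, ZMod.cast_id]
    rw [h1]
    field_simp
    ring
  -- down-closedness
  have hdown : ∀ m ∈ S, m ≠ 0 → m - 1 ∈ S := by
    rintro m hm hm0
    obtain ⟨x, hx, rfl⟩ := mem_image.mp hm
    have hxne : x ≠ x₁ := by
      intro h; rw [h, hj1] at hm0; exact hm0 rfl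
    have hxr : x + r ∈ X := huniq x hx hxne
    refine mem_image.mpr ⟨x + r, hxr, ?_⟩
    have hz : (x₁ - x) * r⁻¹ ≠ 0 := by
      intro h
      apply hm0
      simp [hj, h]
    have : (x₁ - (x + r)) * r⁻¹ = (x₁ - x) * r⁻¹ - 1 := by field_simp; ring
    simp only [hj, this]
    rw [val_sub_one hz]
  -- S is downward closed, so S = range #X
  have hrange : S = range #X := by
    have hsub : ∀ m ∈ S, ∀ i, i ≤ m → m - i ∈ S := by
      intro m hm i
      induction i with
      | zero => intro _; simpa using hm
      | succ k ih =>
        intro hk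
        have h1 : m - k ∈ S := ih (by omega)
        have h2 : m - k ≠ 0 := by omega
        have := hdown _ h1 h2
        have h3 : m - k - 1 = m - (k+1) := by omega
        rwa [h3] at this
    -- max element
    obtain ⟨M, hM, hMmax⟩ := S.exists_max_image id ⟨0, hS0⟩
    have hsubset : S ⊆ range (M + 1) := by
      intro m hm
      simp only [mem_range]
      have := hMmax m hm
      simp only [id_eq] at this
      omega
    have hsup : range (M + 1) ⊆ S := by
      intro m hm
      simp only [mem_range] at hm
      have := hsub M hM (M - m) (by omega)
      have h3 : M - (M - m) = m := by omega
      rwa [h3] at this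
    have heq : S = range (M + 1) := Subset.antisymm hsubset hsup
    rw [heq, card_range] at hScard
    rw [heq, hScard]
  -- conclude
  refine ⟨x₁, ?_⟩
  ext x
  rw [mem_ap]
  constructor
  · intro hx
    refine ⟨j x, ?_, ?_⟩
    · have : j x ∈ S := mem_image.mpr ⟨x, hx, rfl⟩
      rw [hrange] at this
      exact mem_range.mp this
    · rw [mul_neg, ← sub_eq_add_neg]; exact hid x
  · rintro ⟨i, hi, rfl⟩
    have : i ∈ S := by rw [hrange]; exact mem_range.mpr hi
    obtain ⟨x, hx, hjx⟩ := mem_image.mp this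
    have := hid x
    rw [hjx] at this
    rw [mul_neg, ← sub_eq_add_neg, this]
    exact hx

private lemma closed_translate {p : ℕ} [Fact p.Prime] {X : Finset (ZMod p)} (hne : X.Nonempty)
    {r : ZMod p} (hr : r ≠ 0) (hcl : X.image (· + r) ⊆ X) : X = univ := by
  obtain ⟨x₀, hx₀⟩ := hne
  have key : ∀ i : ℕ, x₀ + (i : ZMod p) * r ∈ X := by
    intro i
    induction i with
    | zero => simpa using hx₀
    | succ k ih =>
      have : (x₀ + (k : ZMod p) * r) + r ∈ X := hcl (mem_image_of_mem _ ih)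
      have he : (x₀ + (k : ZMod p) * r) + r = x₀ + ((k+1 : ℕ) : ZMod p) * r := by
        push_cast; ring
      rwa [he] at this
  apply eq_univ_of_forall
  intro y
  have := key (((y - x₀) * r⁻¹).val)
  have h2 : ((((y - x₀) * r⁻¹).val : ℕ) : ZMod p) = (y - x₀) * r⁻¹ := by
    simp [ZMod.natCast_val, ZMod.cast_id]
  rw [h2] at this
  have h3 : x₀ + (y - x₀) * r⁻¹ * r = y := by field_simp; ring
  rwa [h3] at this

private lemma no_bad {p : ℕ} [Fact p.Prime] {X B : Finset (ZMod p)}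
    (h0B : (0 : ZMod p) ∈ B) (hk : 3 ≤ #B) (hX2 : 2 ≤ #X)
    (hcrit : #(X + B) + 1 = #X + #B) (hbound : #(X + B) + 2 ≤ p)
    (hbad : ∀ e : ZMod p, #((B.image (· + e)) ∩ X) ≤ 1 ∨ #((B.image (· + e)) ∩ X) = #B) :
    False := by
  classical
  set Sg := X + B with hSg
  have hXSg : X ⊆ Sg := by
    intro x hx
    rw [hSg]
    have := add_mem_add hx h0B
    simpa using this
  -- Z = new elements
  set Z := Sg \ X with hZ
  have hZcard : #Z = #B - 1 := by
    rw [hZ, card_sdiff_of_subset hXSg]; omega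
  -- each "single" f determines Z = (B \ {0}) + f
  have hsingle : ∀ f ∈ X, (∃ b ∈ B, b + f ∉ X) → (B.erase 0).image (· + f) = Z := by
    intro f hf hex
    obtain ⟨b₀, hb₀, hb₀f⟩ := hex
    set Tf := (B.image (· + f)) ∩ X with hTf
    have hfTf : f ∈ Tf := by
      rw [hTf]
      exact mem_inter.mpr ⟨mem_image.mpr ⟨0, h0B, by ring⟩, hf⟩
    have hTflt : #Tf < #B := by
      have hss : Tf ⊂ B.image (· + f) := by
        constructor
        · exact inter_subset_left
        · intro hsub
          have : b₀ + f ∈ Tf := hsub (mem_image_of_mem _ hb₀)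
          exact hb₀f (mem_inter.mp this).2
      calc #Tf < #(B.image (· + f)) := card_lt_card hss
      _ = #B := card_image_of_injective _ (add_left_injective f)
    have hTf1 : Tf = {f} := by
      rcases hbad f with h | h
      · apply Subset.antisymm
        · intro x hx
          have h2 : ({f} : Finset (ZMod p)) ⊆ Tf := singleton_subset_iff.mpr hfTf
          have := eq_of_subset_of_card_le h2 (le_trans h (by simp))
          rw [← this] at hx; exact hx
        · exact singleton_subset_iff.mpr hfTf
      · rw [← hTf] at h; omega
    have hsub : (B.erase 0).image (· + f) ⊆ Z := by
      intro y hy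
      obtain ⟨b, hb, rfl⟩ := mem_image.mp hy
      obtain ⟨hbne, hbB⟩ := mem_erase.mp hb
      rw [hZ, mem_sdiff]
      constructor
      · rw [hSg]
        have := add_mem_add hbB hf
        rwa [add_comm B X] at this
      · intro hbfX
        have hmem : b + f ∈ Tf := mem_inter.mpr ⟨mem_image_of_mem _ hbB, hbfX⟩
        rw [hTf1, mem_singleton] at hmem
        apply hbne
        have : b + f = 0 + f := by rw [hmem]; ring
        exact add_right_cancel this
    have hcards : #((B.erase 0).image (· + f)) = #Z := by
      rw [card_image_of_injective _ (add_left_injective f), card_erase_of_mem h0B, hZcard]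
    exact eq_of_subset_of_card_le hsub (le_of_eq hcards.symm)
  -- at most one single
  have huniq : ∀ f ∈ X, ∀ f' ∈ X, (∃ b ∈ B, b + f ∉ X) → (∃ b ∈ B, b + f' ∉ X) → f = f' := by
    intro f hf f' hf' h1 h2
    have e1 := hsingle f hf h1
    have e2 := hsingle f' hf' h2
    have heq : (B.erase 0).image (· + f) = (B.erase 0).image (· + f') := by rw [e1, e2]
    -- sum both sides
    have hsum := congrArg (fun (s : Finset (ZMod p)) => ∑ y ∈ s, y) heq
    rw [sum_image (by intro a _ b _ h; exact add_right_cancel h),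
        sum_image (by intro a _ b _ h; exact add_right_cancel h)] at hsum
    rw [sum_add_distrib, sum_add_distrib, sum_const, sum_const] at hsum
    have hcard_pos : (0 : ℕ) < #(B.erase 0) := by
      rw [card_erase_of_mem h0B]; omega
    have hne0 : ((#(B.erase 0) : ℕ) : ZMod p) ≠ 0 := by
      rw [Ne, ZMod.natCast_eq_zero_iff]
      intro hdvd
      have hlt : #(B.erase 0) < p := by
        rw [card_erase_of_mem h0B]
        have : #B ≤ #Sg + 1 := by omega
        omega
      have := Nat.le_of_dvd hcard_pos hdvd
      omega
    have : (#(B.erase 0) : ZMod p) * f = (#(B.erase 0) : ZMod p) * f' := by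
      have h3 := hsum
      rw [nsmul_eq_mul, nsmul_eq_mul] at h3
      exact add_left_cancel h3
    exact mul_left_cancel₀ hne0 this
  -- E0 : the full translates within X
  set E0 := X.filter (fun f => ∀ b ∈ B, b + f ∈ X) with hE0
  have hE0card : #X ≤ #E0 + 1 := by
    set Xs := X.filter (fun f => ¬ ∀ b ∈ B, b + f ∈ X) with hXs
    have hpart : #E0 + #Xs = #X := by
      rw [hE0, hXs]
      exact card_filter_add_card_filter_not _
    have hXs1 : #Xs ≤ 1 := by
      rw [card_le_one]
      intro f hf f' hf'
      rw [hXs, mem_filter] at hf hf'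
      push_neg at hf hf'
      obtain ⟨hfX, b, hb, hbf⟩ := hf
      obtain ⟨hfX', b', hb', hbf'⟩ := hf'
      exact huniq f hfX f' hfX' ⟨b, hb, hbf⟩ ⟨b', hb', hbf'⟩
    omega
  have hE0ne : E0.Nonempty := by
    rw [← card_pos]; omega
  have hE0sub : E0 + B ⊆ X := by
    intro y hy
    rw [mem_add] at hy
    obtain ⟨e, he, b, hb, rfl⟩ := hy
    rw [hE0, mem_filter] at he
    have := he.2 b hb
    rwa [add_comm] at this
  -- Cauchy--Davenport
  have hCD := ZMod.cauchy_davenport (Fact.out : p.Prime) hE0ne ⟨0, h0B⟩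
  have hle : #(E0 + B) ≤ #X := card_le_card hE0sub
  have hXlt : #X < p := by
    have := card_le_card hXSg
    omega
  rcases min_le_iff.mp hCD with h | h
  · omega
  · omega

private lemma add_image_translate {p : ℕ} (X B : Finset (ZMod p)) (e : ZMod p) :
    X + B.image (· + e) = (X + B).image (· + e) := by
  ext y
  simp only [mem_add, mem_image]
  constructor
  · rintro ⟨x, hx, z, ⟨b, hb, rfl⟩, rfl⟩
    exact ⟨x + b, ⟨x, hx, b, hb, rfl⟩, by ring⟩
  · rintro ⟨z, ⟨x, hx, b, hb, rfl⟩, rfl⟩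
    exact ⟨x, hx, b + e, ⟨b, hb, rfl⟩, by ring⟩

private lemma ap_translate {p : ℕ} (a r c : ZMod p) (m : ℕ) :
    (ap p a r m).image (· + c) = ap p (a + c) r m := by
  ext y
  simp only [mem_image, mem_ap]
  constructor
  · rintro ⟨z, ⟨i, hi, rfl⟩, rfl⟩
    exact ⟨i, hi, by ring⟩
  · rintro ⟨i, hi, rfl⟩
    exact ⟨a + (i : ZMod p) * r, ⟨i, hi, rfl⟩, by ring⟩

private lemma critical_ap {p : ℕ} [Fact p.Prime] :
    ∀ k : ℕ, ∀ X B : Finset (ZMod p), #B = k → 2 ≤ #X → 2 ≤ k →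
    #(X + B) + 1 = #X + k → #(X + B) + 2 ≤ p →
    ∃ a r : ZMod p, r ≠ 0 ∧ X + B = ap p a r #(X + B) := by
  intro k
  induction k using Nat.strong_induction_on with
  | _ k IH =>
  intro X B hBk hX2 hk2 hcrit hbound
  rcases eq_or_lt_of_le hk2 with hk2' | hk3
  · -- base case k = 2
    obtain ⟨b₀, b₁, hne, hB⟩ := card_eq_two.mp (by rw [hBk]; exact hk2'.symm)
    set r := b₁ - b₀ with hr
    have hrne : r ≠ 0 := by rw [hr]; exact sub_ne_zero.mpr hne.symm
    set Y := X.image (· + b₀) with hY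
    have hYcard : #Y = #X := card_image_of_injective _ (add_left_injective b₀)
    have hdecomp : X + B = Y ∪ Y.image (· + r) := by
      rw [hB]
      ext y
      simp only [mem_add, mem_union, mem_image, hY, mem_insert, mem_singleton]
      constructor
      · rintro ⟨x, hx, b, hb, rfl⟩
        rcases hb with rfl | rfl
        · exact Or.inl ⟨x, hx, rfl⟩
        · exact Or.inr ⟨x + b₀, ⟨x, hx, rfl⟩, by rw [hr]; ring⟩
      · rintro (⟨x, hx, rfl⟩ | ⟨z, ⟨x, hx, rfl⟩, rfl⟩)
        · exact ⟨x, hx, b₀, Or.inl rfl, rfl⟩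
        · exact ⟨x, hx, b₁, Or.inr rfl, by rw [hr]; ring⟩
    have hYne : Y.Nonempty := by
      rw [← card_pos, hYcard]; omega
    have hYc : #(Y ∪ Y.image (· + r)) = #Y + 1 := by
      rw [← hdecomp, hYcard]
      omega
    obtain ⟨a, hYap⟩ := one_exit hYne hrne hYc
    -- reverse the AP to get difference r
    have hrev : ap p a (-r) #Y = ap p (a + ((#Y - 1 : ℕ) : ZMod p) * (-r)) r #Y := by
      have := ap_rev a (-r) #Y
      rwa [neg_neg] at this
    have hYap' : Y = ap p (a + ((#Y - 1 : ℕ) : ZMod p) * (-r)) r #Y := hYap.trans hrev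
    set a' := a + ((#Y - 1 : ℕ) : ZMod p) * (-r) with ha'
    have hfinal : X + B = ap p a' r (#Y + 1) := by
      rw [hdecomp, ← ap_ext a' r (m := #Y) (by omega)]
      rw [← hYap']
    refine ⟨a', r, hrne, ?_⟩
    have hc2 : #(X + B) = #Y + 1 := by omega
    rw [hc2, hfinal]
  · -- inductive step, k ≥ 3
    have hBne : B.Nonempty := by rw [← card_pos, hBk]; omega
    obtain ⟨b₀, hb₀⟩ := hBne
    set B' := B.image (· + (-b₀)) with hB'
    have h0B' : (0 : ZMod p) ∈ B' := by
      rw [hB']; exact mem_image.mpr ⟨b₀, hb₀, by ring⟩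
    have hB'k : #B' = k := by
      rw [hB', card_image_of_injective _ (add_left_injective _), hBk]
    have hSg' : X + B' = (X + B).image (· + (-b₀)) := by
      rw [hB', add_image_translate]
    have hSg'card : #(X + B') = #(X + B) := by
      rw [hSg']; exact card_image_of_injective _ (add_left_injective _)
    -- a good transform e exists
    have hgood : ∃ e : ZMod p, 2 ≤ #((B'.image (· + e)) ∩ X) ∧ #((B'.image (· + e)) ∩ X) < k := by
      by_contra hcon
      push_neg at hcon
      apply no_bad h0B' (by omega : 3 ≤ #B') (hX2) (by rw [hB'k]; omega) (by omega)
      intro e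
      rcases Nat.lt_or_ge (#((B'.image (· + e)) ∩ X)) 2 with h2 | h2
      · exact Or.inl (by omega)
      · have h3 : #((B'.image (· + e)) ∩ X) ≤ k := by
          calc #((B'.image (· + e)) ∩ X) ≤ #(B'.image (· + e)) := card_le_card inter_subset_left
          _ = k := by rw [card_image_of_injective _ (add_left_injective _), hB'k]
        have h4 := hcon e h2
        exact Or.inr (by rw [hB'k]; omega)
    obtain ⟨e, he2, hek⟩ := hgood
    set c := #((B'.image (· + e)) ∩ X) with hc
    set B₁ := B'.filter (fun b => b + e ∈ X) with hB₁
    set X₁ := X ∪ B'.image (· + e) with hX₁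
    have hB₁im : B₁.image (· + e) = (B'.image (· + e)) ∩ X := by
      ext y
      simp only [hB₁, mem_image, mem_filter, mem_inter]
      constructor
      · rintro ⟨b, ⟨hb, hbe⟩, rfl⟩
        exact ⟨⟨b, hb, rfl⟩, hbe⟩
      · rintro ⟨⟨b, hb, rfl⟩, hy⟩
        exact ⟨b, ⟨hb, hy⟩, rfl⟩
    have hB₁card : #B₁ = c := by
      rw [hc, ← hB₁im, card_image_of_injective _ (add_left_injective _)]
    have hX₁card : #X₁ + c = #X + k := by
      have := card_union_add_card_inter X (B'.image (· + e))
      rw [inter_comm] at this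
      rw [hX₁]
      rw [card_image_of_injective _ (add_left_injective _), hB'k] at this
      omega
    have hsub : X₁ + B₁ ⊆ X + B' := by
      intro y hy
      rw [mem_add] at hy
      obtain ⟨x, hx, b₁, hb₁, rfl⟩ := hy
      rw [hX₁, mem_union] at hx
      have hb₁B' : b₁ ∈ B' := mem_of_mem_filter _ hb₁
      have hb₁X : b₁ + e ∈ X := (mem_filter.mp hb₁).2
      rcases hx with hx | hx
      · exact add_mem_add hx hb₁B'
      · obtain ⟨b, hb, rfl⟩ := mem_image.mp hx
        have : (b₁ + e) + b ∈ X + B' := add_mem_add hb₁X hb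
        have he' : (b₁ + e) + b = b + e + b₁ := by ring
        rwa [he'] at this
    have hX₁ne : X₁.Nonempty := Nonempty.mono subset_union_left (by rw [← card_pos]; omega)
    have hB₁ne : B₁.Nonempty := by rw [← card_pos, hB₁card]; omega
    have hCD := ZMod.cauchy_davenport (Fact.out : p.Prime) hX₁ne hB₁ne
    have hle : #(X₁ + B₁) ≤ #(X + B') := card_le_card hsub
    have hcrit₁ : #(X₁ + B₁) + 1 = #X₁ + #B₁ := by
      rcases min_le_iff.mp hCD with h | h
      · omega
      · omega
    have heq : X₁ + B₁ = X + B' := by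
      apply eq_of_subset_of_card_le hsub
      omega
    obtain ⟨a, r, hrne, hap⟩ := IH c (by omega) X₁ B₁ hB₁card
      (le_trans hX2 (card_le_card subset_union_left)) he2
      (by omega) (by omega)
    refine ⟨a + b₀, r, hrne, ?_⟩
    have htr : X + B = (X + B').image (· + b₀) := by
      rw [hSg']
      rw [Finset.image_image]
      have : ((· + b₀) ∘ (· + (-b₀))) = (id : ZMod p → ZMod p) := by
        funext z; simp
      rw [this, image_id]
    have hcc : #(X₁ + B₁) = #(X + B) := by rw [heq, hSg'card]
    conv_lhs => rw [htr, ← heq, hap]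
    rw [ap_translate, hcc]

private lemma ap_two_diffs {p : ℕ} [Fact p.Prime] {a b ρ q : ZMod p} {m : ℕ}
    (hm : 2 ≤ m) (h2m : 2 * m ≤ p) (hρ : ρ ≠ 0) (hq : q ≠ 0)
    (heq : ap p a ρ m = ap p b q m) : q = ρ ∨ q = -ρ := by
  classical
  have hppos : 0 < p := (Fact.out : p.Prime).pos
  have hmp : m < p := by omega
  set S := ap p b q m with hS
  -- first computation of the intersection
  have hint1 : S ∩ S.image (· + q) = ap p (b + q) q (m - 1) := by
    ext x
    simp only [mem_inter, mem_image, hS, mem_ap]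
    constructor
    · rintro ⟨⟨i, hi, rfl⟩, ⟨z, ⟨j, hj, rfl⟩, hz⟩⟩
      have h1 : (i : ZMod p) * q = ((j : ZMod p) + 1) * q := by linear_combination -hz
      have hcast : (i : ZMod p) = ((j + 1 : ℕ) : ZMod p) := by
        push_cast
        exact mul_right_cancel₀ hq h1
      have hij : i = j + 1 := natCast_inj_of_lt (by omega) (by omega) hcast
      refine ⟨i - 1, by omega, ?_⟩
      have hge : 1 ≤ i := by omega
      have hc2 : ((i - 1 : ℕ) : ZMod p) = (i : ZMod p) - 1 := by
        have h3 : i - 1 + 1 = i := by omega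
        calc ((i - 1 : ℕ) : ZMod p) = ((i - 1 + 1 : ℕ) : ZMod p) - 1 := by push_cast; ring
        _ = (i : ZMod p) - 1 := by rw [h3]
      rw [hc2]; ring
    · rintro ⟨i, hi, rfl⟩
      constructor
      · refine ⟨i + 1, by omega, ?_⟩
        push_cast; ring
      · exact ⟨b + (i : ZMod p) * q, ⟨i, by omega, rfl⟩, by ring⟩
  have hN1 : #(S ∩ S.image (· + q)) = m - 1 := by
    rw [hint1, ap_card hq (by omega)]
  -- second computation via the ρ-representation
  set u := q * ρ⁻¹ with hu
  have hune : u ≠ 0 := mul_ne_zero hq (inv_ne_zero hρ)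
  set v := u.val with hv
  have hv1 : 1 ≤ v := by
    rcases Nat.eq_zero_or_pos v with h | h
    · exact absurd ((ZMod.val_eq_zero u).mp h) hune
    · exact h
  have hvp : v < p := ZMod.val_lt u
  have hvcast : ((v : ℕ) : ZMod p) = u := by simp [hv, ZMod.natCast_val, ZMod.cast_id]
  have huρ : u * ρ = q := by rw [hu, inv_mul_cancel_right₀ hρ]
  have hSa : S = ap p a ρ m := heq.symm
  have hint2 : S ∩ S.image (· + q)
      = ((range m).filter (fun j => (j + v) % p < m)).image (fun j : ℕ => a + (j : ZMod p) * ρ + q) := by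
    ext x
    simp only [mem_inter, mem_image, mem_filter, mem_range]
    constructor
    · rintro ⟨hxS, ⟨z, hzS, rfl⟩⟩
      rw [hSa, mem_ap] at hzS hxS
      obtain ⟨j, hj, rfl⟩ := hzS
      obtain ⟨i, hi, hieq⟩ := hxS
      have hcast : (i : ZMod p) = (((j + v) % p : ℕ) : ZMod p) := by
        rw [ZMod.natCast_mod]
        push_cast
        rw [hvcast]
        have h1 : (i : ZMod p) * ρ = (j : ZMod p) * ρ + u * ρ := by
          rw [huρ]; linear_combination hieq
        have h2 : (i : ZMod p) * ρ = ((j : ZMod p) + u) * ρ := by rw [add_mul]; exact h1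
        exact mul_right_cancel₀ hρ h2
      have hij : i = (j + v) % p := natCast_inj_of_lt (by omega) (Nat.mod_lt _ hppos) hcast
      exact ⟨j, ⟨hj, by omega⟩, rfl⟩
    · rintro ⟨j, ⟨hj, hjv⟩, rfl⟩
      constructor
      · rw [hSa, mem_ap]
        refine ⟨(j + v) % p, hjv, ?_⟩
        have : (((j + v) % p : ℕ) : ZMod p) = (j : ZMod p) + u := by
          rw [ZMod.natCast_mod]; push_cast; rw [hvcast]
        rw [this, add_mul, huρ]; ring
      · refine ⟨a + (j : ZMod p) * ρ, ?_, rfl⟩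
        rw [hSa, mem_ap]
        exact ⟨j, hj, rfl⟩
  have hinj2 : Set.InjOn (fun j : ℕ => a + (j : ZMod p) * ρ + q) (range m) := by
    intro i hi j hj hij
    simp only [coe_range, Set.mem_Iio] at hi hj
    have h1 : (i : ZMod p) * ρ = (j : ZMod p) * ρ := by
      simp only at hij
      linear_combination hij
    exact natCast_inj_of_lt (by omega) (by omega) (mul_right_cancel₀ hρ h1)
  have hN2 : #(S ∩ S.image (· + q)) = #((range m).filter (fun j => (j + v) % p < m)) := by
    rw [hint2]
    apply card_image_of_injOn
    intro i hi j hj hij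
    simp only [coe_filter, mem_range, Set.mem_setOf_eq] at hi hj
    have h1 : (i : ZMod p) * ρ = (j : ZMod p) * ρ := by linear_combination hij
    exact natCast_inj_of_lt (by omega) (by omega) (mul_right_cancel₀ hρ h1)
  -- bad j's if v not 1 or p-1
  by_contra hcon
  push_neg at hcon
  obtain ⟨hq1, hq2⟩ := hcon
  have hv2 : 2 ≤ v := by
    rcases Nat.lt_or_ge v 2 with h | h
    · exfalso
      have hveq : v = 1 := by omega
      apply hq1
      rw [← huρ, ← hvcast, hveq]
      simp
    · exact h
  have hvp2 : v ≤ p - 2 := by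
    rcases Nat.lt_or_ge v (p - 1) with h | h
    · omega
    · exfalso
      have hveq : v = p - 1 := by omega
      apply hq2
      rw [← huρ, ← hvcast, hveq]
      have : ((p - 1 : ℕ) : ZMod p) = -1 := by
        have h1 : ((p : ℕ) : ZMod p) = 0 := ZMod.natCast_self p
        have h2 : p - 1 + 1 = p := by omega
        calc ((p - 1 : ℕ) : ZMod p) = ((p - 1 + 1 : ℕ) : ZMod p) - 1 := by push_cast; ring
        _ = ((p : ℕ) : ZMod p) - 1 := by rw [h2]
        _ = -1 := by rw [h1]; ring
      rw [this]; ring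
  -- exhibit two bad indices
  obtain ⟨j₁, j₂, hjne, hj1m, hj2m, hbad1, hbad2⟩ :
      ∃ j₁ j₂ : ℕ, j₁ ≠ j₂ ∧ j₁ < m ∧ j₂ < m ∧ ¬ ((j₁ + v) % p < m) ∧ ¬ ((j₂ + v) % p < m) := by
    rcases le_or_gt v m with hvm | hvm
    · refine ⟨m - 1, m - 2, by omega, by omega, by omega, ?_, ?_⟩
      · rw [Nat.mod_eq_of_lt (by omega)]; omega
      · rw [Nat.mod_eq_of_lt (by omega)]; omega
    · refine ⟨0, 1, by omega, by omega, by omega, ?_, ?_⟩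
      · rw [Nat.mod_eq_of_lt (by omega)]; omega
      · rw [Nat.mod_eq_of_lt (by omega)]; omega
  have hsub2 : ({j₁, j₂} : Finset ℕ) ⊆ (range m).filter (fun j => ¬ ((j + v) % p < m)) := by
    intro x hx
    rcases mem_insert.mp hx with rfl | hx
    · exact mem_filter.mpr ⟨mem_range.mpr hj1m, hbad1⟩
    · rw [mem_singleton] at hx
      subst hx
      exact mem_filter.mpr ⟨mem_range.mpr hj2m, hbad2⟩
  have hc2 : 2 ≤ #((range m).filter (fun j => ¬ ((j + v) % p < m))) := by
    calc 2 = #({j₁, j₂} : Finset ℕ) := (card_pair hjne).symm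
    _ ≤ _ := card_le_card hsub2
  have hpart := card_filter_add_card_filter_not (s := range m)
    (p := fun j => (j + v) % p < m)
  rw [card_range] at hpart
  omega

private lemma ap_smul {p : ℕ} (h a r : ZMod p) (m : ℕ) :
    (ap p a r m).image (h * ·) = ap p (h * a) (h * r) m := by
  ext y
  simp only [mem_image, mem_ap]
  constructor
  · rintro ⟨z, ⟨i, hi, rfl⟩, rfl⟩
    exact ⟨i, hi, by ring⟩
  · rintro ⟨i, hi, rfl⟩
    exact ⟨a + (i : ZMod p) * r, ⟨i, hi, rfl⟩, by ring⟩

private lemma key_lemma {p s : ℕ} [Fact p.Prime] (hs3 : 3 ≤ s) {Hf T : Finset (ZMod p)}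
    (hH1 : (1 : ZMod p) ∈ Hf) (hH0 : (0 : ZMod p) ∉ Hf) (hHcard : #Hf = s)
    (hHmul : ∀ a ∈ Hf, ∀ b ∈ Hf, a * b ∈ Hf)
    (hHinv : ∀ a ∈ Hf, a⁻¹ ∈ Hf)
    (hT0 : (0 : ZMod p) ∈ T) (hTH : Hf ⊆ T)
    (hTinv : ∀ h ∈ Hf, ∀ t ∈ T, h * t ∈ T) :
    min p (#T + 2 * s) ≤ #(T + insert 0 Hf) := by
  classical
  set A := insert 0 Hf with hA
  set Sg := T + A with hSg
  have hppos : 0 < p := (Fact.out : p.Prime).pos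
  have hAcard : #A = s + 1 := by rw [hA, card_insert_of_notMem hH0, hHcard]
  have hTne : T.Nonempty := ⟨0, hT0⟩
  have hAne : A.Nonempty := ⟨0, by rw [hA]; exact mem_insert_self _ _⟩
  have hTA : A ⊆ T := by
    rw [hA]; intro x hx
    rcases mem_insert.mp hx with rfl | hx
    · exact hT0
    · exact hTH hx
  have hTcard : s + 1 ≤ #T := hAcard ▸ card_le_card hTA
  have hTSg : T ⊆ Sg := by
    intro t ht
    rw [hSg]
    have := add_mem_add ht (mem_insert_self (0 : ZMod p) Hf)
    simpa using this
  have hCD := ZMod.cauchy_davenport (Fact.out : p.Prime) hTne hAne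
  rw [← hSg, hAcard] at hCD
  rcases le_or_gt p #Sg with hple | hplt
  · exact le_trans (min_le_left _ _) hple
  have hTs : #T + s ≤ #Sg := by
    rcases min_le_iff.mp hCD with h | h
    · omega
    · omega
  rcases le_or_gt (#T + 2 * s) #Sg with hdone | hlt
  · exact le_trans (min_le_right _ _) hdone
  exfalso
  -- invariances
  have hne0 : ∀ h ∈ Hf, h ≠ 0 := fun h hh he => hH0 (he ▸ hh)
  have hAinv : ∀ h ∈ Hf, ∀ a ∈ A, h * a ∈ A := by
    intro h hh a ha
    rw [hA] at ha ⊢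
    rcases mem_insert.mp ha with rfl | ha
    · rw [mul_zero]; exact mem_insert_self _ _
    · exact mem_insert_of_mem (hHmul h hh a ha)
  have hSginv : ∀ h ∈ Hf, ∀ x ∈ Sg, h * x ∈ Sg := by
    intro h hh x hx
    rw [hSg, mem_add] at hx ⊢
    obtain ⟨t, ht, a, ha, rfl⟩ := hx
    exact ⟨h * t, hTinv h hh t ht, h * a, hAinv h hh a ha, by ring⟩
  -- the difference D
  set D := Sg \ T with hD
  have hDcard : #D = #Sg - #T := by rw [hD, card_sdiff_of_subset hTSg]
  have hDinv : ∀ h ∈ Hf, ∀ x ∈ D, h * x ∈ D := by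
    intro h hh x hx
    rw [hD, mem_sdiff] at hx ⊢
    refine ⟨hSginv h hh x hx.1, fun hmem => hx.2 ?_⟩
    have h2 := hTinv h⁻¹ (hHinv h hh) _ hmem
    rwa [inv_mul_cancel_left₀ (hne0 h hh)] at h2
  have hD0 : (0 : ZMod p) ∉ D := by
    rw [hD, mem_sdiff]; intro h; exact h.2 hT0
  have hDne : D.Nonempty := by rw [← card_pos]; omega
  obtain ⟨c, hc⟩ := hDne
  have hcne : c ≠ 0 := fun h => hD0 (h ▸ hc)
  -- orbit machinery
  have horb_sub : ∀ x ∈ D, Hf.image (· * x) ⊆ D := by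
    intro x hx y hy
    obtain ⟨h, hh, rfl⟩ := mem_image.mp hy
    exact hDinv h hh x hx
  have horb_card : ∀ x : ZMod p, x ≠ 0 → #(Hf.image (· * x)) = s := by
    intro x hx
    rw [card_image_of_injective _ (mul_left_injective₀ hx), hHcard]
  have horb_mem : ∀ x : ZMod p, x ∈ Hf.image (· * x) := by
    intro x; exact mem_image.mpr ⟨1, hH1, by ring⟩
  have hDorb : D = Hf.image (· * c) := by
    apply Subset.antisymm
    · intro x hx
      by_contra hxc
      have hdisj : Disjoint (Hf.image (· * x)) (Hf.image (· * c)) := by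
        rw [disjoint_left]
        intro y hy1 hy2
        obtain ⟨h, hh, rfl⟩ := mem_image.mp hy1
        obtain ⟨h', hh', heq'⟩ := mem_image.mp hy2
        apply hxc
        have hxeq : x = (h⁻¹ * h') * c := by
          have : h * x = h' * c := heq'.symm
          field_simp [hne0 h hh] at this ⊢
          rw [mul_comm] at this
          linear_combination this
        exact mem_image.mpr ⟨h⁻¹ * h', hHmul _ (hHinv h hh) _ hh', hxeq.symm⟩
      have hunion : (Hf.image (· * x)) ∪ (Hf.image (· * c)) ⊆ D :=
        union_subset (horb_sub x hx) (horb_sub c hc)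
      have := card_le_card hunion
      rw [card_union_of_disjoint hdisj] at this
      have hxne : x ≠ 0 := fun h => hD0 (h ▸ hx)
      rw [horb_card x hxne, horb_card c hcne] at this
      omega
    · exact horb_sub c hc
  have hDs : #D = s := by rw [hDorb, horb_card c hcne]
  have hSgcard : #Sg = #T + s := by omega
  -- complement bound
  set W := univ \ Sg with hW
  have hWne : W.Nonempty := by
    rw [← card_pos, hW, card_sdiff_of_subset (subset_univ _), card_univ, ZMod.card]
    omega
  obtain ⟨w, hw⟩ := hWne
  have hw0 : w ≠ 0 := by
    intro h
    rw [hW, mem_sdiff] at hw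
    exact hw.2 (h ▸ hTSg hT0)
  have hWinv : ∀ h ∈ Hf, ∀ x ∈ W, h * x ∈ W := by
    intro h hh x hx
    rw [hW, mem_sdiff] at hx ⊢
    refine ⟨mem_univ _, fun hmem => hx.2 ?_⟩
    have h2 := hSginv h⁻¹ (hHinv h hh) _ hmem
    rwa [inv_mul_cancel_left₀ (hne0 h hh)] at h2
  have hWs : s ≤ #W := by
    have hsub : Hf.image (· * w) ⊆ W := by
      intro y hy
      obtain ⟨h, hh, rfl⟩ := mem_image.mp hy
      exact hWinv h hh w hw
    have := card_le_card hsub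
    rwa [horb_card w hw0] at this
  have hSgbound : #Sg + 3 ≤ p := by
    have : #W + #Sg = p := by
      rw [hW, card_sdiff_of_subset (subset_univ _), card_univ, ZMod.card]
      omega
    omega
  have h2s2 : 2 * s + 2 ≤ p := by omega
  -- apply Prop P
  obtain ⟨a, r, hrne, hSgap⟩ := critical_ap (s + 1) T A hAcard (by omega) (by omega)
    (by rw [← hSg]; omega) (by rw [← hSg]; omega)
  rw [← hSg] at hSgap
  -- extension of AP
  set L := #Sg with hL
  have hextcard : #(Sg ∪ Sg.image (· + r)) = L + 1 := by
    rw [hSgap]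
    rw [ap_ext a r (by omega : 1 ≤ L)]
    exact ap_card hrne (by omega)
  -- A' := A ∪ (A + r)
  set A' := A ∪ A.image (· + r) with hA'
  have hA'sub : A' + T ⊆ Sg ∪ Sg.image (· + r) := by
    intro y hy
    rw [mem_add] at hy
    obtain ⟨x, hx, t, ht, rfl⟩ := hy
    rw [hA', mem_union] at hx
    rcases hx with hx | hx
    · apply mem_union_left
      rw [hSg]
      have := add_mem_add ht hx
      have he : t + x = x + t := by ring
      rwa [← he]
    · obtain ⟨a'', ha'', rfl⟩ := mem_image.mp hx
      apply mem_union_right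
      refine mem_image.mpr ⟨t + a'', ?_, by ring⟩
      rw [hSg]
      exact add_mem_add ht ha''
  have hA'ne : A'.Nonempty := hAne.mono (by rw [hA']; exact subset_union_left)
  have hCD2 := ZMod.cauchy_davenport (Fact.out : p.Prime) hA'ne hTne
  have hA'le : #(A' + T) ≤ L + 1 := hextcard ▸ card_le_card hA'sub
  have hA'card : #A' ≤ s + 2 := by
    rcases min_le_iff.mp hCD2 with h | h
    · omega
    · omega
  have hAA' : A ⊆ A' := by rw [hA']; exact subset_union_left
  have hA'ge : s + 1 ≤ #A' := hAcard ▸ card_le_card hAA'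
  have hA'eq : #A' = s + 2 := by
    rcases eq_or_lt_of_le hA'ge with h | h
    · exfalso
      have hAeq : A' = A := (eq_of_subset_of_card_le hAA' (by omega)).symm
      have hcl : A.image (· + r) ⊆ A := by
        intro y hy
        have : y ∈ A' := by rw [hA', mem_union]; exact Or.inr hy
        rwa [hAeq] at this
      have := closed_translate hAne hrne hcl
      have hcard := congrArg Finset.card this
      rw [hAcard, card_univ, ZMod.card] at hcard
      omega
    · omega
  -- A is an AP with difference -r
  have hc3 : #(A ∪ A.image (· + r)) = #A + 1 := by
    rw [← hA', hA'eq, hAcard]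
  obtain ⟨a₀, hAap⟩ := one_exit hAne hrne hc3
  rw [hAcard] at hAap
  -- pick h in Hf other than ±1
  have hexh : ∃ h ∈ Hf, h ≠ 1 ∧ h ≠ -1 := by
    by_contra hcon
    push_neg at hcon
    have hsub : Hf ⊆ ({1, -1} : Finset (ZMod p)) := by
      intro x hx
      by_cases h1 : x = 1
      · subst h1; exact mem_insert_self _ _
      · have h2 := hcon x hx h1
        subst h2
        exact mem_insert_of_mem (mem_singleton_self _)
    have h2 := card_le_card hsub
    have h3 : #({1, -1} : Finset (ZMod p)) ≤ 2 := (card_insert_le _ _).trans (by simp)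
    omega
  obtain ⟨h, hh, hh1, hhm1⟩ := hexh
  have hhne0 : h ≠ 0 := hne0 h hh
  -- h • A = A
  have hAsmul : A.image (h * ·) = A := by
    apply eq_of_subset_of_card_le
    · intro y hy
      obtain ⟨x, hx, rfl⟩ := mem_image.mp hy
      exact hAinv h hh x hx
    · rw [card_image_of_injective _ (mul_right_injective₀ hhne0)]
  have hap2 : ap p a₀ (-r) (s+1) = ap p (h * a₀) (h * (-r)) (s+1) := by
    conv_lhs => rw [← hAap]
    rw [← hAsmul]
    conv_lhs => rw [hAap]
    rw [ap_smul]
  have := ap_two_diffs (by omega : 2 ≤ s + 1) (by omega : 2 * (s + 1) ≤ p)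
    (neg_ne_zero.mpr hrne) (by simpa using mul_ne_zero hhne0 (neg_ne_zero.mpr hrne)) hap2
  rcases this with h1 | h1
  · apply hh1
    have : h * r = r := by linear_combination -h1
    have h2 : h * r = 1 * r := by rw [this, one_mul]
    exact mul_right_cancel₀ hrne h2
  · apply hhm1
    have : h * r = -r := by linear_combination -h1
    have h2 : h * r = (-1) * r := by rw [this]; ring
    exact mul_right_cancel₀ hrne h2



private def Af (p n : ℕ) [NeZero p] : Finset (ZMod p) := Finset.univ.image (· ^ n)

private def PS (p n : ℕ) [NeZero p] : ℕ → Finset (ZMod p)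
  | 0 => {0}
  | l + 1 => PS p n l + Af p n

private def Hfin (p n : ℕ) [Fact p.Prime] : Finset (ZMod p) :=
  Finset.univ.image (fun u : (ZMod p)ˣ => ((u : ZMod p)) ^ n)

private lemma Hfin_card {p n : ℕ} [Fact p.Prime] :
    #(Hfin p n) = (p - 1) / Nat.gcd n (p - 1) := by
  classical
  obtain ⟨g, hg⟩ := IsCyclic.exists_generator (α := (ZMod p)ˣ)
  have horder : orderOf g = p - 1 := by
    rw [orderOf_eq_card_of_forall_mem_zpowers hg, Nat.card_eq_fintype_card, ZMod.card_units]
  have huniv : (univ : Finset (ZMod p)ˣ) = (range (p - 1)).image (g ^ ·) := by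
    rw [← horder, IsCyclic.image_range_orderOf hg]
  set gn := g ^ n with hgn
  have hordn : orderOf gn = (p - 1) / Nat.gcd n (p - 1) := by
    rw [hgn, orderOf_pow, horder, Nat.gcd_comm]
  have hordpos : 0 < orderOf gn := orderOf_pos gn
  have hordle : orderOf gn ≤ p - 1 := by
    rw [hordn]
    exact Nat.div_le_self _ _
  have h1 : Hfin p n = (range (p - 1)).image (fun k => ((gn ^ k : (ZMod p)ˣ) : ZMod p)) := by
    rw [Hfin, huniv, image_image]
    apply image_congr
    intro k _
    simp only [Function.comp_apply]
    rw [hgn, ← pow_mul, mul_comm, pow_mul]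
    push_cast
    rfl
  have h2 : (range (p - 1)).image (fun k => ((gn ^ k : (ZMod p)ˣ) : ZMod p))
      = (range (orderOf gn)).image (fun k => ((gn ^ k : (ZMod p)ˣ) : ZMod p)) := by
    apply Subset.antisymm
    · intro y hy
      obtain ⟨k, _, rfl⟩ := mem_image.mp hy
      refine mem_image.mpr ⟨k % orderOf gn, mem_range.mpr (Nat.mod_lt _ hordpos), ?_⟩
      rw [pow_mod_orderOf]
    · apply image_subset_image
      exact range_subset_range.mpr hordle
  rw [h1, h2, ← hordn]
  rw [card_image_of_injOn]
  · exact card_range _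
  · intro i hi j hj hij
    simp only [coe_range, Set.mem_Iio] at hi hj
    have : gn ^ i = gn ^ j := Units.ext hij
    exact pow_injOn_Iio_orderOf hi hj this

private lemma Hfin_one {p n : ℕ} [Fact p.Prime] : (1 : ZMod p) ∈ Hfin p n :=
  mem_image.mpr ⟨1, mem_univ _, by simp⟩

private lemma Hfin_zero {p n : ℕ} [Fact p.Prime] (hn : n ≠ 0) : (0 : ZMod p) ∉ Hfin p n := by
  intro h
  obtain ⟨u, _, hu⟩ := mem_image.mp h
  exact u.ne_zero ((pow_eq_zero_iff hn).mp hu)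

private lemma Hfin_mul {p n : ℕ} [Fact p.Prime] :
    ∀ a ∈ Hfin p n, ∀ b ∈ Hfin p n, a * b ∈ Hfin p n := by
  intro a ha b hb
  obtain ⟨u, _, rfl⟩ := mem_image.mp ha
  obtain ⟨w, _, rfl⟩ := mem_image.mp hb
  refine mem_image.mpr ⟨u * w, mem_univ _, ?_⟩
  push_cast
  rw [mul_pow]

private lemma Hfin_inv {p n : ℕ} [Fact p.Prime] :
    ∀ a ∈ Hfin p n, a⁻¹ ∈ Hfin p n := by
  intro a ha
  obtain ⟨u, _, rfl⟩ := mem_image.mp ha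
  refine mem_image.mpr ⟨u⁻¹, mem_univ _, ?_⟩
  rw [← inv_pow]
  congr 1
  exact (Units.val_inv_eq_inv_val u)

private lemma Af_eq {p n : ℕ} [Fact p.Prime] (hn : n ≠ 0) :
    Af p n = insert (0 : ZMod p) (Hfin p n) := by
  ext x
  simp only [Af, mem_image, mem_insert, mem_univ, true_and]
  constructor
  · rintro ⟨y, rfl⟩
    by_cases hy : y = 0
    · subst hy; exact Or.inl (zero_pow hn)
    · exact Or.inr (mem_image.mpr ⟨Units.mk0 y hy, mem_univ _, rfl⟩)
  · rintro (rfl | hx)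
    · exact ⟨0, zero_pow hn⟩
    · obtain ⟨u, _, rfl⟩ := mem_image.mp hx
      exact ⟨(u : ZMod p), rfl⟩

private lemma PS_zero_mem {p n : ℕ} [Fact p.Prime] (hn : n ≠ 0) :
    ∀ l, (0 : ZMod p) ∈ PS p n l := by
  intro l
  induction l with
  | zero => simp [PS]
  | succ k ih =>
    show (0 : ZMod p) ∈ PS p n k + Af p n
    have h0A : (0 : ZMod p) ∈ Af p n := by
      rw [Af_eq hn]; exact mem_insert_self _ _
    have := add_mem_add ih h0A
    simpa using this

private lemma PS_mono {p n : ℕ} [Fact p.Prime] (hn : n ≠ 0) (l : ℕ) :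
    PS p n l ⊆ PS p n (l + 1) := by
  intro t ht
  show t ∈ PS p n l + Af p n
  have h0A : (0 : ZMod p) ∈ Af p n := by
    rw [Af_eq hn]; exact mem_insert_self _ _
  have := add_mem_add ht h0A
  simpa using this

private lemma PS_inv {p n : ℕ} [Fact p.Prime] (hn : n ≠ 0) :
    ∀ l, ∀ h ∈ Hfin p n, ∀ t ∈ PS p n l, h * t ∈ PS p n l := by
  intro l
  induction l with
  | zero =>
    intro h _ t ht
    simp only [PS, mem_singleton] at ht ⊢
    rw [ht, mul_zero]
  | succ k ih =>
    intro h hh t ht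
    obtain ⟨t', ht', a, ha, rfl⟩ := mem_add.mp ht
    show h * (t' + a) ∈ PS p n k + Af p n
    have hAinv : h * a ∈ Af p n := by
      rw [Af_eq hn] at ha ⊢
      rcases mem_insert.mp ha with rfl | ha
      · rw [mul_zero]; exact mem_insert_self _ _
      · exact mem_insert_of_mem (Hfin_mul h hh a ha)
    have := add_mem_add (ih h hh t' ht') hAinv
    rwa [← mul_add] at this

private lemma PS_spec {p n : ℕ} [Fact p.Prime] (l : ℕ) :
    ((PS p n l : Finset (ZMod p)) : Set (ZMod p))
      = {c : ZMod p | ∃ x : Fin l → ZMod p, ∑ i, x i ^ n = c} := by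
  induction l with
  | zero =>
    ext c
    simp only [PS, coe_singleton, Set.mem_singleton_iff, Set.mem_setOf_eq]
    constructor
    · rintro rfl
      exact ⟨fun i => 0, by simp⟩
    · rintro ⟨x, rfl⟩
      simp
  | succ k ih =>
    ext c
    show c ∈ (PS p n k + Af p n : Finset (ZMod p)) ↔ _
    simp only [Set.mem_setOf_eq]
    rw [mem_add]
    constructor
    · rintro ⟨t, ht, a, ha, rfl⟩
      have : (t : ZMod p) ∈ ((PS p n k : Finset (ZMod p)) : Set (ZMod p)) := ht
      rw [ih] at this
      obtain ⟨x, rfl⟩ := this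
      obtain ⟨y, _, rfl⟩ := mem_image.mp ha
      refine ⟨Fin.snoc x y, ?_⟩
      rw [Fin.sum_univ_castSucc]
      simp [Fin.snoc_castSucc, Fin.snoc_last]
    · rintro ⟨x, rfl⟩
      refine ⟨∑ i : Fin k, x (Fin.castSucc i) ^ n, ?_, x (Fin.last k) ^ n, ?_, ?_⟩
      · have : (∑ i : Fin k, x (Fin.castSucc i) ^ n) ∈
            ((PS p n k : Finset (ZMod p)) : Set (ZMod p)) := by
          rw [ih]
          exact ⟨fun i => x (Fin.castSucc i), rfl⟩
        exact this
      · exact mem_image.mpr ⟨x (Fin.last k), mem_univ _, rfl⟩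
      · rw [Fin.sum_univ_castSucc]

/-- For `p > 3` prime, `l ≥ 1`, `d = gcd(n, p-1)` with `1 < d < (p-1)/2` and
`s = (p-1)/d`, the range of sums of `l` `n`-th powers in `ℤ/pℤ` has cardinality
at least `min{p, (2l-1)s + 1}`. -/
theorem stmt_7 (p l n d s : ℕ) (hp : p.Prime) (hp3 : 3 < p) (hl : 1 ≤ l)
    (hd : d = Nat.gcd n (p - 1)) (hd1 : 1 < d) (hd2 : d < (p - 1) / 2)
    (hs : s = (p - 1) / d) :
    min p ((2 * l - 1) * s + 1) ≤
      Set.ncard {c : ZMod p | ∃ x : Fin l → ZMod p, ∑ i, x i ^ n = c} := by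
  haveI : Fact p.Prime := ⟨hp⟩
  -- basic numerics
  have hn : n ≠ 0 := by
    intro hn0
    subst hn0
    rw [Nat.gcd_zero_left] at hd
    subst hd
    have := Nat.div_le_self (p - 1) 2
    omega
  have hddvd : d ∣ p - 1 := by rw [hd]; exact Nat.gcd_dvd_right _ _
  have hsd : s * d = p - 1 := by rw [hs]; exact Nat.div_mul_cancel hddvd
  have h2d : 2 * (d + 1) ≤ p - 1 := by
    have h1 : d + 1 ≤ (p - 1) / 2 := hd2
    have := (Nat.le_div_iff_mul_le (by norm_num : 0 < 2)).mp h1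
    omega
  have hs3 : 3 ≤ s := by
    by_contra hcon
    push_neg at hcon
    interval_cases s
    · omega
    · omega
    · omega
  have hsp : s + 1 ≤ p := by
    have h1 : s * 2 ≤ s * d := Nat.mul_le_mul_left s (by omega)
    omega
  have h2sp : 2 * s ≤ p + 1 := by
    have h1 : s * 2 ≤ s * d := Nat.mul_le_mul_left s (by omega)
    omega
  -- rewrite the goal via PS
  rw [← PS_spec (p := p) (n := n) l, Set.ncard_coe_finset]
  -- growth by induction
  have hAf : Af p n = insert (0 : ZMod p) (Hfin p n) := Af_eq hn
  have hHcard : #(Hfin p n) = s := by rw [Hfin_card, ← hd, ← hs]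
  have hAfcard : #(Af p n) = s + 1 := by
    rw [hAf, card_insert_of_notMem (Hfin_zero hn), hHcard]
  have hgrow : ∀ m : ℕ, 1 ≤ m → min p ((2 * m - 1) * s + 1) ≤ #(PS p n m) := by
    intro m hm
    induction m, hm using Nat.le_induction with
    | base =>
      have hPS1 : PS p n 1 = Af p n := by
        show ({0} : Finset (ZMod p)) + Af p n = Af p n
        ext x
        simp only [mem_add, mem_singleton]
        constructor
        · rintro ⟨t, rfl, a, ha, rfl⟩
          simpa using ha
        · intro hx
          exact ⟨0, rfl, x, hx, by ring⟩
      rw [hPS1, hAfcard]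
      have : (2 * 1 - 1) * s + 1 = s + 1 := by omega
      rw [this]
      exact le_trans (min_le_right _ _) (le_refl _)
    | succ m hm ih =>
      have hkey := key_lemma (p := p) hs3 Hfin_one (Hfin_zero hn) hHcard Hfin_mul Hfin_inv
        (PS_zero_mem hn m)
        (by
          -- Hfin ⊆ PS p n m
          have h1 : Hfin p n ⊆ PS p n 1 := by
            intro x hx
            show x ∈ ({0} : Finset (ZMod p)) + Af p n
            refine mem_add.mpr ⟨0, mem_singleton_self 0, x, ?_, by ring⟩
            rw [hAf]; exact mem_insert_of_mem hx
          intro x hx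
          have h2 : ∀ j, 1 ≤ j → x ∈ PS p n j := by
            intro j hj
            induction j, hj using Nat.le_induction with
            | base => exact h1 hx
            | succ j hj ihj => exact PS_mono hn j ihj
          exact h2 m hm)
        (PS_inv hn m)
      have hstep : PS p n (m + 1) = PS p n m + insert 0 (Hfin p n) := by
        show PS p n m + Af p n = _
        rw [hAf]
      rw [hstep]
      rcases le_or_gt p ((2 * m - 1) * s + 1) with hc | hc
      · have h1 : (p : ℕ) ≤ #(PS p n m) := by
          have := min_eq_left hc ▸ ih
          omega
        have h2 : #(PS p n m) ≤ #(PS p n m + insert 0 (Hfin p n)) := by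
          apply card_le_card
          intro t ht
          have := add_mem_add ht (mem_insert_self (0 : ZMod p) (Hfin p n))
          simpa using this
        exact le_trans (min_le_left _ _) (le_trans h1 h2)
      · have h1 : (2 * m - 1) * s + 1 ≤ #(PS p n m) := by
          have := min_eq_right (le_of_lt hc) ▸ ih
          omega
        have h2 : (2 * (m + 1) - 1) * s + 1 ≤ #(PS p n m) + 2 * s := by
          have h3 : (2 * (m + 1) - 1) = (2 * m - 1) + 2 := by omega
          rw [h3, Nat.add_mul]
          omega
        calc min p ((2 * (m + 1) - 1) * s + 1) ≤ min p (#(PS p n m) + 2 * s) := by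
              apply min_le_min (le_refl p) h2
        _ ≤ _ := hkey
  exact hgrow l hl
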